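/- Every tangle formula is first-order definable over path-finite wK4 frames: for every formula φ ∈ L_◇^∞ there is a first-order formula θ_φ(x) in the first-order language with one binary relation symbol (for ⊏) and one unary predicate symbol for each propositional variable occurring in φ, such that for every path-finite weakly transitive Kripke model M and every w ∈ M: w ⊨_M φ if and only if M ⊨ θ_φ(w) (with M viewed as a first-order structure). -/

import Mathlib

namespace TangledMu

/-- Formulas of the μ-calculus in negation normal form, with de Bruijn fixed-point
variables (`var`), propositional constants (`prop`/`nprop`), and "named" fresh
variables `x_{νx.φ}` / `x_{μx.φ}` (`fvar true φ` / `fvar false φ`) introduced by the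
modified subformula operator `sub*`, together with their negations (`nfvar`). -/
inductive MuForm (P : Type) : Type
  | tru : MuForm P
  | var : Nat → MuForm P
  | prop : P → MuForm P
  | nprop : P → MuForm P
  | fvar : Bool → MuForm P → MuForm P
  | nfvar : Bool → MuForm P → MuForm P
  | and : MuForm P → MuForm P → MuForm P
  | or : MuForm P → MuForm P → MuForm P
  | dia : MuForm P → MuForm P
  | box : MuForm P → MuForm P
  | nu : MuForm P → MuForm P
  | mu : MuForm P → MuForm P

/-- A Kripke model on the set of worlds `W` with propositional constants `P`. -/
structure KModel (W P : Type) where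
  rel : W → W → Prop
  val : P → Set W

/-- Extend an environment for de Bruijn fixed-point variables. -/
def envCons {W : Type} (X : Set W) (e : Nat → Set W) : Nat → Set W
  | 0 => X
  | n + 1 => e n

/-- Kripke semantics of the μ-calculus: `‖◇φ‖ = ‖φ‖↓`, `μ`/`ν` are least/greatest
fixed points; a named variable `x_{νx.φ}` is semantically interpreted as `νx.φ`
(so that satisfaction of a formula of `Σ` is satisfaction of its closed form `⌊φ⌋`). -/
def MuForm.sat {W P : Type} (M : KModel W P) : MuForm P → (Nat → Set W) → Set W
  | .tru, _ => Set.univ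
  | .var n, e => e n
  | .prop p, _ => M.val p
  | .nprop p, _ => (M.val p)ᶜ
  | .fvar b ψ, e =>
      if b then ⋃₀ {X : Set W | X ⊆ MuForm.sat M ψ (envCons X e)}
      else ⋂₀ {X : Set W | MuForm.sat M ψ (envCons X e) ⊆ X}
  | .nfvar b ψ, e =>
      (if b then ⋃₀ {X : Set W | X ⊆ MuForm.sat M ψ (envCons X e)}
       else ⋂₀ {X : Set W | MuForm.sat M ψ (envCons X e) ⊆ X})ᶜ
  | .and φ ψ, e => MuForm.sat M φ e ∩ MuForm.sat M ψ e
  | .or φ ψ, e => MuForm.sat M φ e ∪ MuForm.sat M ψ e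
  | .dia φ, e => {w | ∃ u, M.rel w u ∧ u ∈ MuForm.sat M φ e}
  | .box φ, e => {w | ∀ u, M.rel w u → u ∈ MuForm.sat M φ e}
  | .nu φ, e => ⋃₀ {X : Set W | X ⊆ MuForm.sat M φ (envCons X e)}
  | .mu φ, e => ⋂₀ {X : Set W | MuForm.sat M φ (envCons X e) ⊆ X}

/-- `w ⊨_M φ` (for sentences; fixed-point variables get the empty valuation). -/
def KModel.Sat {W P : Type} (M : KModel W P) (w : W) (φ : MuForm P) : Prop :=
  w ∈ φ.sat M (fun _ => (∅ : Set W))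

/-- `⊑`, the reflexive closure of the accessibility relation. -/
def KModel.rle {W P : Type} (M : KModel W P) (u v : W) : Prop :=
  u = v ∨ M.rel u v

/-- A relation is weakly transitive iff `a ⊏ b ⊏ c` with `a ≠ c` implies `a ⊏ c`. -/
def WeaklyTransitive {W : Type} (r : W → W → Prop) : Prop :=
  ∀ a b c, a ≠ c → r a b → r b c → r a c

/-- Negation, defined classically on negation normal forms
(`¬νx.φ(x) := μx.¬φ(¬x)`, `¬μx.φ(x) := νx.¬φ(¬x)`); `¬⊤` is the contradictory `μx.x`. -/
def MuForm.neg {P : Type} : MuForm P → MuForm P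
  | .tru => .mu (.var 0)
  | .var n => .var n
  | .prop p => .nprop p
  | .nprop p => .prop p
  | .fvar b ψ => .nfvar b ψ
  | .nfvar b ψ => .fvar b ψ
  | .and φ ψ => .or φ.neg ψ.neg
  | .or φ ψ => .and φ.neg ψ.neg
  | .dia φ => .box φ.neg
  | .box φ => .dia φ.neg
  | .nu φ => .mu φ.neg
  | .mu φ => .nu φ.neg

/-- `⋄̇φ := φ ∨ ◇φ`. -/
def dotDia {P : Type} (φ : MuForm P) : MuForm P := .or φ (.dia φ)

/-- `⊡φ := φ ∧ □φ`. -/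
def dotBox {P : Type} (φ : MuForm P) : MuForm P := .and φ (.box φ)

end TangledMu
namespace TangledMu

/-- Substitute the de Bruijn variable `k` by the (closed) formula `t`,
lowering the indices of the variables above `k`. -/
def MuForm.inst {P : Type} (t : MuForm P) : Nat → MuForm P → MuForm P
  | _, .tru => .tru
  | k, .var n => if n = k then t else if k < n then .var (n - 1) else .var n
  | _, .prop p => .prop p
  | _, .nprop p => .nprop p
  | _, .fvar b ψ => .fvar b ψ
  | _, .nfvar b ψ => .nfvar b ψ
  | k, .and φ ψ => .and (MuForm.inst t k φ) (MuForm.inst t k ψ)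
  | k, .or φ ψ => .or (MuForm.inst t k φ) (MuForm.inst t k ψ)
  | k, .dia φ => .dia (MuForm.inst t k φ)
  | k, .box φ => .box (MuForm.inst t k φ)
  | k, .nu φ => .nu (MuForm.inst t (k + 1) φ)
  | k, .mu φ => .mu (MuForm.inst t (k + 1) φ)

/-- One step of the modified subformula operator `sub*`: `SubStep ψ φ` says that
`ψ` is an immediate modified subformula of `φ`.  For `νx.φ` (resp. `μx.φ`) the
immediate modified subformula is `φ(x_{νx.φ})`, the body with the bound variable
replaced by the fresh variable named after the fixed-point formula; `⋄̇σ` and `⊡σ`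
have `σ` as their only immediate modified subformula. -/
inductive SubStep {P : Type} : MuForm P → MuForm P → Prop
  | and_left (φ ψ : MuForm P) : ψ ≠ .box φ → SubStep φ (.and φ ψ)
  | and_right (φ ψ : MuForm P) : ψ ≠ .box φ → SubStep ψ (.and φ ψ)
  | or_left (φ ψ : MuForm P) : ψ ≠ .dia φ → SubStep φ (.or φ ψ)
  | or_right (φ ψ : MuForm P) : ψ ≠ .dia φ → SubStep ψ (.or φ ψ)
  | dotdia (φ : MuForm P) : SubStep φ (dotDia φ)
  | dotbox (φ : MuForm P) : SubStep φ (dotBox φ)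
  | dia (φ : MuForm P) : SubStep φ (.dia φ)
  | box (φ : MuForm P) : SubStep φ (.box φ)
  | nu (φ : MuForm P) : SubStep (MuForm.inst (.fvar true φ) 0 φ) (.nu φ)
  | mu (φ : MuForm P) : SubStep (MuForm.inst (.fvar false φ) 0 φ) (.mu φ)

/-- `Σ` is closed under the modified subformula operator `sub*`. -/
def SubstarClosed {P : Type} (S : Set (MuForm P)) : Prop :=
  ∀ φ ∈ S, ∀ ψ, SubStep ψ φ → ψ ∈ S

/-- `Σ` is closed under negation. -/
def NegClosed {P : Type} (S : Set (MuForm P)) : Prop :=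
  ∀ φ ∈ S, MuForm.neg φ ∈ S

/-- `Σ` is closed under `⋄̇`. -/
def DotDiaClosed {P : Type} (S : Set (MuForm P)) : Prop :=
  ∀ φ ∈ S, dotDia φ ∈ S

/-- A cluster: a set of worlds any two of which are related by `⊑`. -/
def IsCluster {W P : Type} (M : KModel W P) (C : Set W) : Prop :=
  ∀ u ∈ C, ∀ v ∈ C, M.rle u v

/-- `C_w`, the union of all clusters containing `w`. -/
def clusterOf {W P : Type} (M : KModel W P) (w : W) : Set W :=
  ⋃₀ {C : Set W | IsCluster M C ∧ w ∈ C}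

/-- `A ≺ B` iff every `v ∈ B` lies strictly above some `u ∈ A`. -/
def Prec {W P : Type} (M : KModel W P) (A B : Set W) : Prop :=
  ∀ v ∈ B, ∃ u ∈ A, M.rel u v ∧ ¬ M.rel v u

/-- `A ⪯ B` iff every `v ∈ B` lies `⊑`-above some `u ∈ A`. -/
def PrecEq {W P : Type} (M : KModel W P) (A B : Set W) : Prop :=
  ∀ v ∈ B, ∃ u ∈ A, M.rle u v

/-- `A↑*`, the reflexive upset of `A`. -/
def upStar {W P : Type} (M : KModel W P) (A : Set W) : Set W :=
  A ∪ {v | ∃ u ∈ A, M.rel u v}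

/-- `w` is `Σ`-final in `M`. -/
def FinalPt {W P : Type} (M : KModel W P) (S : Set (MuForm P)) (w : W) : Prop :=
  ∃ φ ∈ S, M.Sat w φ ∧ ∀ u, M.rel w u → M.Sat u φ → M.rel u w

/-- `M^Σ`, the largest `Σ`-final subset of `M` (the set of all `Σ`-final points). -/
def finalSet {W P : Type} (M : KModel W P) (S : Set (MuForm P)) : Set W :=
  {w | FinalPt M S w}

/-- `DepthGe M Σ n A` says `dpt_Σ^M(A) ≥ n`: there is a `≺`-increasing chain of `n`
nonempty subsets of `M^Σ` above `A`. -/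
def DepthGe {W P : Type} (M : KModel W P) (S : Set (MuForm P)) : Nat → Set W → Prop
  | 0, _ => True
  | n + 1, A => ∃ B : Set W, B.Nonempty ∧ B ⊆ finalSet M S ∧ Prec M A B ∧ DepthGe M S n B

/-- `dpt_Σ^M(A) = n`. -/
def depthEq {W P : Type} (M : KModel W P) (S : Set (MuForm P)) (A : Set W) (n : Nat) : Prop :=
  DepthGe M S n A ∧ ¬ DepthGe M S (n + 1) A

/-- `w ⊨_M ⟨n⟩̄φ`: some `Σ`-final `v ⊒ w` of `Σ`-depth `n` satisfies `φ`. -/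
def BarSat {W P : Type} (M : KModel W P) (S : Set (MuForm P)) (w : W) (n : Nat)
    (φ : MuForm P) : Prop :=
  ∃ v, FinalPt M S v ∧ M.rle w v ∧ depthEq M S {v} n ∧ M.Sat v φ

/-- Propositional constants occurring in a formula. -/
def MuForm.props {P : Type} : MuForm P → Set P
  | .tru => ∅
  | .var _ => ∅
  | .prop p => {p}
  | .nprop p => {p}
  | .fvar _ ψ => ψ.props
  | .nfvar _ ψ => ψ.props
  | .and φ ψ => φ.props ∪ ψ.props
  | .or φ ψ => φ.props ∪ ψ.props
  | .dia φ => φ.props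
  | .box φ => φ.props
  | .nu φ => φ.props
  | .mu φ => φ.props

/-- The propositional constants occurring in some formula of `Σ`. -/
def SigmaProps {P : Type} (S : Set (MuForm P)) : Set P :=
  {p | ∃ φ ∈ S, p ∈ φ.props}

end TangledMu
namespace TangledMu

/-- Finite disjunction (`⊥ := μx.x` for the empty disjunction). -/
def bigOr {P : Type} : List (MuForm P) → MuForm P
  | [] => .mu (.var 0)
  | [φ] => φ
  | φ :: ψ :: l => .or φ (bigOr (ψ :: l))

/-- Finite conjunction. -/
def bigAnd {P : Type} : List (MuForm P) → MuForm P
  | [] => .tru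
  | [φ] => φ
  | φ :: ψ :: l => .and φ (bigAnd (ψ :: l))

/-- The `i`-th disjunct `⋄̇(φ_i ∧ x) ∧ ⋀_{j ≠ i} ◇(φ_j ∧ x)` of the tangle. -/
def tangleDisj {P : Type} (Γ : List (MuForm P)) (i : Nat) : MuForm P :=
  .and (dotDia (.and (Γ.getD i .tru) (.var 0)))
    (bigAnd ((Γ.eraseIdx i).map fun ψ => .dia (.and ψ (.var 0))))

/-- Gougeon's tangle `◇^∞Γ := νx.⋁_{φ_i ∈ Γ} (⋄̇(φ_i ∧ x) ∧ ⋀_{j ≠ i} ◇(φ_j ∧ x))`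
of a finite multiset (list) of formulas. -/
def tangleForm {P : Type} (Γ : List (MuForm P)) : MuForm P :=
  .nu (bigOr ((List.range Γ.length).map (tangleDisj Γ)))

/-- The tangle language `L_◇^∞`, generated from `⊤` and propositional constants by
`¬`, `∧`, `∨`, `◇`, `□` and `◇^∞Γ` for finite `Γ ⊆ L_◇^∞`, viewed as a fragment of `L_μ`. -/
inductive IsTangle {P : Type} : MuForm P → Prop
  | tru : IsTangle .tru
  | prop (p : P) : IsTangle (.prop p)
  | neg {φ} : IsTangle φ → IsTangle (MuForm.neg φ)
  | and {φ ψ} : IsTangle φ → IsTangle ψ → IsTangle (.and φ ψ)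
  | or {φ ψ} : IsTangle φ → IsTangle ψ → IsTangle (.or φ ψ)
  | dia {φ} : IsTangle φ → IsTangle (.dia φ)
  | box {φ} : IsTangle φ → IsTangle (.box φ)
  | tangle (Γ : List (MuForm P)) : (∀ φ ∈ Γ, IsTangle φ) → IsTangle (tangleForm Γ)

/-- All free de Bruijn fixed-point variables of the formula are `< k`
(for `k = 0`: no free fixed-point variables). -/
def MuForm.varsBelow {P : Type} : MuForm P → Nat → Prop
  | .tru, _ => True
  | .var n, k => n < k
  | .prop _, _ => True
  | .nprop _, _ => True
  | .fvar _ ψ, _ => ψ.varsBelow 1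
  | .nfvar _ ψ, _ => ψ.varsBelow 1
  | .and φ ψ, k => φ.varsBelow k ∧ ψ.varsBelow k
  | .or φ ψ, k => φ.varsBelow k ∧ ψ.varsBelow k
  | .dia φ, k => φ.varsBelow k
  | .box φ, k => φ.varsBelow k
  | .nu φ, k => φ.varsBelow (k + 1)
  | .mu φ, k => φ.varsBelow (k + 1)

/-- The formula is a genuine `L_μ` formula: it contains no named variables `x_ψ`. -/
def MuForm.noNames {P : Type} : MuForm P → Prop
  | .fvar _ _ => False
  | .nfvar _ _ => False
  | .and φ ψ => φ.noNames ∧ ψ.noNames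
  | .or φ ψ => φ.noNames ∧ ψ.noNames
  | .dia φ => φ.noNames
  | .box φ => φ.noNames
  | .nu φ => φ.noNames
  | .mu φ => φ.noNames
  | _ => True

end TangledMu
namespace TangledMu

open FirstOrder

/-- The first-order language with one binary relation symbol (for `⊏`) and one unary
predicate symbol for each propositional variable in `P`. -/
def folLang (P : Type) : FirstOrder.Language where
  Functions := fun _ => Empty
  Relations := fun n =>
    match n with
    | 1 => P
    | 2 => PUnit
    | _ => Empty

/-- A Kripke model viewed as a first-order structure: the binary relation symbol is
interpreted as `⊏` and the unary predicate symbol `P_p` as `‖p‖`. -/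
def folStr {W P : Type} (M : KModel W P) : (folLang P).Structure W where
  funMap {n} f _ := Empty.elim f
  RelMap {n} :=
    match n with
    | 0 => fun r _ => Empty.elim r
    | 1 => fun p x => x 0 ∈ M.val p
    | 2 => fun _ x => M.rel (x 0) (x 1)
    | _ + 3 => fun r _ => Empty.elim r

/-- `M ⊨ θ(w)`: realization of a first-order formula with one free variable in a
Kripke model viewed as a first-order structure. -/
def FOSat {W P : Type} (M : KModel W P) (θ : (folLang P).Formula (Fin 1)) (w : W) : Prop :=
  @FirstOrder.Language.Formula.Realize (folLang P) W (folStr M) (Fin 1) θ (fun _ => w)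

end TangledMu
namespace TangledMu

/-- A `wK4` model is path-finite if the ordering `≺` on nonempty clusters is
conversely well-founded (there is no infinite `≺`-increasing chain of clusters). -/
def PathFinite {W P : Type} (M : KModel W P) : Prop :=
  WellFounded (fun B A : Set W =>
    IsCluster M A ∧ IsCluster M B ∧ A.Nonempty ∧ B.Nonempty ∧ Prec M A B)

end TangledMu

namespace TangledMu

variable {W P : Type}

private lemma envCons_agree {k : Nat} {e e' : Nat → Set W} (X : Set W)
    (h : ∀ n, n < k → e n = e' n) : ∀ n, n < k + 1 → envCons X e n = envCons X e' n := by
  intro n hn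
  cases n with
  | zero => rfl
  | succ m => exact h m (by omega)

theorem satCongr (M : KModel W P) :
    ∀ (φ : MuForm P) (k : Nat) (e e' : Nat → Set W), φ.varsBelow k →
      (∀ n, n < k → e n = e' n) → φ.sat M e = φ.sat M e' := by
  intro φ
  induction φ with
  | tru => intros; rfl
  | var n => intro k e e' hv h; exact h n hv
  | prop p => intros; rfl
  | nprop p => intros; rfl
  | fvar b ψ ih =>
      intro k e e' hv h
      have : ∀ X : Set W, ψ.sat M (envCons X e) = ψ.sat M (envCons X e') := fun X =>
        ih 1 _ _ hv (envCons_agree X (fun n hn => absurd hn (Nat.not_lt_zero n)))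
      simp only [MuForm.sat, this]
  | nfvar b ψ ih =>
      intro k e e' hv h
      have : ∀ X : Set W, ψ.sat M (envCons X e) = ψ.sat M (envCons X e') := fun X =>
        ih 1 _ _ hv (envCons_agree X (fun n hn => absurd hn (Nat.not_lt_zero n)))
      simp only [MuForm.sat, this]
  | and φ ψ ih1 ih2 =>
      intro k e e' hv h
      simp only [MuForm.sat, ih1 k _ _ hv.1 h, ih2 k _ _ hv.2 h]
  | or φ ψ ih1 ih2 =>
      intro k e e' hv h
      simp only [MuForm.sat, ih1 k _ _ hv.1 h, ih2 k _ _ hv.2 h]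
  | dia φ ih =>
      intro k e e' hv h
      simp only [MuForm.sat, ih k _ _ hv h]
  | box φ ih =>
      intro k e e' hv h
      simp only [MuForm.sat, ih k _ _ hv h]
  | nu φ ih =>
      intro k e e' hv h
      have : ∀ X : Set W, φ.sat M (envCons X e) = φ.sat M (envCons X e') := fun X =>
        ih (k + 1) _ _ hv (envCons_agree X h)
      simp only [MuForm.sat, this]
  | mu φ ih =>
      intro k e e' hv h
      have : ∀ X : Set W, φ.sat M (envCons X e) = φ.sat M (envCons X e') := fun X =>
        ih (k + 1) _ _ hv (envCons_agree X h)
      simp only [MuForm.sat, this]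

theorem sat_mono (M : KModel W P) :
    ∀ (φ : MuForm P), φ.noNames → ∀ (e e' : Nat → Set W),
      (∀ n, e n ⊆ e' n) → φ.sat M e ⊆ φ.sat M e' := by
  intro φ
  induction φ with
  | tru => intros; exact subset_rfl
  | var n => intro _ e e' h; exact h n
  | prop p => intros; exact subset_rfl
  | nprop p => intros; exact subset_rfl
  | fvar b ψ ih => intro h; exact absurd h id
  | nfvar b ψ ih => intro h; exact absurd h id
  | and φ ψ ih1 ih2 =>
      intro hn e e' h
      exact Set.inter_subset_inter (ih1 hn.1 _ _ h) (ih2 hn.2 _ _ h)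
  | or φ ψ ih1 ih2 =>
      intro hn e e' h
      exact Set.union_subset_union (ih1 hn.1 _ _ h) (ih2 hn.2 _ _ h)
  | dia φ ih =>
      intro hn e e' h w hw
      obtain ⟨u, hu1, hu2⟩ := hw
      exact ⟨u, hu1, ih hn _ _ h hu2⟩
  | box φ ih =>
      intro hn e e' h w hw u hu
      exact ih hn _ _ h (hw u hu)
  | nu φ ih =>
      intro hn e e' h
      apply Set.sUnion_subset_sUnion
      intro X hX
      refine hX.trans (ih hn _ _ ?_)
      intro n; cases n with
      | zero => exact subset_rfl
      | succ m => exact h m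
  | mu φ ih =>
      intro hn e e' h
      apply Set.sInter_subset_sInter
      intro X hX
      refine (ih hn (envCons X e) (envCons X e') ?_).trans hX
      intro n; cases n with
      | zero => exact subset_rfl
      | succ m => exact h m

private lemma envCons_compl (X : Set W) (e : Nat → Set W) :
    (fun n => (envCons Xᶜ e n)ᶜ) = envCons X (fun n => (e n)ᶜ) := by
  funext n; cases n with
  | zero => simp [envCons]
  | succ m => rfl

theorem sat_neg (M : KModel W P) :
    ∀ (φ : MuForm P), φ.noNames → ∀ (e : Nat → Set W),
      (MuForm.neg φ).sat M (fun n => (e n)ᶜ) = (φ.sat M e)ᶜ := by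
  intro φ
  induction φ with
  | tru =>
      intro _ e
      simp only [MuForm.neg, MuForm.sat]
      ext x
      simp only [Set.mem_sInter, Set.mem_setOf_eq, Set.compl_univ, Set.mem_empty_iff_false,
        iff_false, not_forall]
      exact ⟨∅, subset_rfl, fun h => h⟩
  | var n => intros; rfl
  | prop p => intros; rfl
  | nprop p => intro _ e; exact (compl_compl _).symm
  | fvar b ψ ih => intro h; exact absurd h id
  | nfvar b ψ ih => intro h; exact absurd h id
  | and φ ψ ih1 ih2 =>
      intro hn e
      simp only [MuForm.neg, MuForm.sat, ih1 hn.1, ih2 hn.2, Set.compl_inter]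
  | or φ ψ ih1 ih2 =>
      intro hn e
      simp only [MuForm.neg, MuForm.sat, ih1 hn.1, ih2 hn.2, Set.compl_union]
  | dia φ ih =>
      intro hn e
      simp only [MuForm.neg, MuForm.sat, ih hn]
      ext w
      simp only [Set.mem_setOf_eq, Set.mem_compl_iff, not_exists]
      constructor
      · intro h u hc
        exact h u hc.1 hc.2
      · intro h u hu1 hu2
        exact h u ⟨hu1, hu2⟩
  | box φ ih =>
      intro hn e
      simp only [MuForm.neg, MuForm.sat, ih hn]
      ext w
      simp only [Set.mem_setOf_eq, Set.mem_compl_iff]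
      constructor
      · rintro ⟨u, hu1, hu2⟩ h
        exact hu2 (h u hu1)
      · intro h
        by_contra hc
        push_neg at hc
        apply h
        intro u hu
        have := hc u hu
        simpa using this
  | nu φ ih =>
      intro hn e
      have key : ∀ X : Set W, (MuForm.neg φ).sat M (envCons X (fun n => (e n)ᶜ)) =
          (φ.sat M (envCons Xᶜ e))ᶜ := by
        intro X
        rw [← envCons_compl, ih hn]
      simp only [MuForm.neg, MuForm.sat, key]
      ext x
      simp only [Set.mem_sInter, Set.mem_setOf_eq, Set.mem_compl_iff, Set.mem_sUnion,
        not_exists]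
      constructor
      · intro h Y hY
        have := h Yᶜ (by rw [compl_compl]; exact Set.compl_subset_compl.mpr hY.1)
        exact this hY.2
      · intro h X hX
        by_contra hx
        exact (h Xᶜ ⟨Set.compl_subset_comm.mp hX, hx⟩)
  | mu φ ih =>
      intro hn e
      have key : ∀ X : Set W, (MuForm.neg φ).sat M (envCons X (fun n => (e n)ᶜ)) =
          (φ.sat M (envCons Xᶜ e))ᶜ := by
        intro X
        rw [← envCons_compl, ih hn]
      simp only [MuForm.neg, MuForm.sat, key]
      ext x
      simp only [Set.mem_sUnion, Set.mem_setOf_eq, Set.mem_compl_iff, Set.mem_sInter]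
      constructor
      · rintro ⟨X, hX, hxX⟩ hall
        have hsub : MuForm.sat M φ (envCons Xᶜ e) ⊆ Xᶜ := by
          intro z hz hzX
          exact (hX hzX) hz
        exact (hall Xᶜ hsub) hxX
      · intro h
        by_contra hc
        push_neg at hc
        apply h
        intro Y hY
        by_contra hx
        refine hc Yᶜ ?_ hx
        simp only [compl_compl]
        intro z hzY hzs
        exact hzY (hY hzs)

end TangledMu

namespace TangledMu

variable {W P : Type}

theorem varsBelow_mono : ∀ (φ : MuForm P) (k k' : Nat), k ≤ k' →
    φ.varsBelow k → φ.varsBelow k' := by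
  intro φ
  induction φ with
  | tru => intros; trivial
  | var n => intro k k' hk h; exact lt_of_lt_of_le h hk
  | prop p => intros; trivial
  | nprop p => intros; trivial
  | fvar b ψ ih => intro k k' hk h; exact h
  | nfvar b ψ ih => intro k k' hk h; exact h
  | and φ ψ ih1 ih2 => intro k k' hk h; exact ⟨ih1 k k' hk h.1, ih2 k k' hk h.2⟩
  | or φ ψ ih1 ih2 => intro k k' hk h; exact ⟨ih1 k k' hk h.1, ih2 k k' hk h.2⟩
  | dia φ ih => intro k k' hk h; exact ih k k' hk h
  | box φ ih => intro k k' hk h; exact ih k k' hk h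
  | nu φ ih => intro k k' hk h; exact ih (k+1) (k'+1) (by omega) h
  | mu φ ih => intro k k' hk h; exact ih (k+1) (k'+1) (by omega) h

theorem varsBelow_neg : ∀ (φ : MuForm P) (k : Nat), φ.varsBelow k →
    (MuForm.neg φ).varsBelow k := by
  intro φ
  induction φ with
  | tru => intro k _; show (0 : Nat) < k + 1; omega
  | var n => intro k h; exact h
  | prop p => intros; trivial
  | nprop p => intros; trivial
  | fvar b ψ ih => intro k h; exact h
  | nfvar b ψ ih => intro k h; exact h
  | and φ ψ ih1 ih2 => intro k h; exact ⟨ih1 k h.1, ih2 k h.2⟩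
  | or φ ψ ih1 ih2 => intro k h; exact ⟨ih1 k h.1, ih2 k h.2⟩
  | dia φ ih => intro k h; exact ih k h
  | box φ ih => intro k h; exact ih k h
  | nu φ ih => intro k h; exact ih (k+1) h
  | mu φ ih => intro k h; exact ih (k+1) h

theorem noNames_neg : ∀ (φ : MuForm P), φ.noNames → (MuForm.neg φ).noNames := by
  intro φ
  induction φ with
  | tru => intros; trivial
  | var n => intro h; exact h
  | prop p => intros; trivial
  | nprop p => intros; trivial
  | fvar b ψ ih => intro h; exact h
  | nfvar b ψ ih => intro h; exact h
  | and φ ψ ih1 ih2 => intro h; exact ⟨ih1 h.1, ih2 h.2⟩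
  | or φ ψ ih1 ih2 => intro h; exact ⟨ih1 h.1, ih2 h.2⟩
  | dia φ ih => intro h; exact ih h
  | box φ ih => intro h; exact ih h
  | nu φ ih => intro h; exact ih h
  | mu φ ih => intro h; exact ih h

theorem bigOr_varsBelow {l : List (MuForm P)} {k : Nat}
    (h : ∀ φ ∈ l, φ.varsBelow k) : (bigOr l).varsBelow k := by
  induction l with
  | nil => show (0:Nat) < k + 1; omega
  | cons a l ih =>
      cases l with
      | nil => exact h a (List.mem_singleton.mpr rfl)
      | cons b l' =>
          exact ⟨h a (List.mem_cons_self),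
            ih (fun φ hφ => h φ (List.mem_cons_of_mem _ hφ))⟩

theorem bigAnd_varsBelow {l : List (MuForm P)} {k : Nat}
    (h : ∀ φ ∈ l, φ.varsBelow k) : (bigAnd l).varsBelow k := by
  induction l with
  | nil => trivial
  | cons a l ih =>
      cases l with
      | nil => exact h a (List.mem_singleton.mpr rfl)
      | cons b l' =>
          exact ⟨h a (List.mem_cons_self),
            ih (fun φ hφ => h φ (List.mem_cons_of_mem _ hφ))⟩

theorem bigOr_noNames {l : List (MuForm P)}
    (h : ∀ φ ∈ l, φ.noNames) : (bigOr l).noNames := by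
  induction l with
  | nil => trivial
  | cons a l ih =>
      cases l with
      | nil => exact h a (List.mem_singleton.mpr rfl)
      | cons b l' =>
          exact ⟨h a (List.mem_cons_self),
            ih (fun φ hφ => h φ (List.mem_cons_of_mem _ hφ))⟩

theorem bigAnd_noNames {l : List (MuForm P)}
    (h : ∀ φ ∈ l, φ.noNames) : (bigAnd l).noNames := by
  induction l with
  | nil => trivial
  | cons a l ih =>
      cases l with
      | nil => exact h a (List.mem_singleton.mpr rfl)
      | cons b l' =>
          exact ⟨h a (List.mem_cons_self),
            ih (fun φ hφ => h φ (List.mem_cons_of_mem _ hφ))⟩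

theorem getD_cases (Γ : List (MuForm P)) (i : Nat) :
    Γ.getD i .tru ∈ Γ ∨ Γ.getD i .tru = MuForm.tru := by
  by_cases h : i < Γ.length
  · left
    rw [List.getD_eq_getElem _ _ h]
    exact List.getElem_mem h
  · right
    rw [List.getD_eq_default _ _ (by omega)]

theorem tangleForm_varsBelow {Γ : List (MuForm P)}
    (h : ∀ φ ∈ Γ, φ.varsBelow 0) : (tangleForm Γ).varsBelow 0 := by
  show (bigOr _).varsBelow 1
  apply bigOr_varsBelow
  intro φ hφ
  rw [List.mem_map] at hφ
  obtain ⟨i, _, rfl⟩ := hφ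
  have hg : (Γ.getD i MuForm.tru).varsBelow 1 := by
    rcases getD_cases Γ i with hm | he
    · exact varsBelow_mono _ 0 1 (by omega) (h _ hm)
    · rw [he]; trivial
  have h0 : (MuForm.var (P := P) 0).varsBelow 1 := by show (0:Nat) < 1; omega
  refine ⟨⟨⟨hg, h0⟩, hg, h0⟩, ?_⟩
  apply bigAnd_varsBelow
  intro φ hφ
  rw [List.mem_map] at hφ
  obtain ⟨ψ, hψ, rfl⟩ := hφ
  have hψΓ : ψ ∈ Γ := List.mem_of_mem_eraseIdx hψ
  exact ⟨varsBelow_mono _ 0 1 (by omega) (h _ hψΓ), h0⟩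

theorem tangleForm_noNames {Γ : List (MuForm P)}
    (h : ∀ φ ∈ Γ, φ.noNames) : (tangleForm Γ).noNames := by
  show (bigOr _).noNames
  apply bigOr_noNames
  intro φ hφ
  rw [List.mem_map] at hφ
  obtain ⟨i, _, rfl⟩ := hφ
  have hget : (Γ.getD i MuForm.tru).noNames := by
    rcases getD_cases Γ i with hm | he
    · exact h _ hm
    · rw [he]; trivial
  refine ⟨⟨⟨hget, trivial⟩, ⟨hget, trivial⟩⟩, ?_⟩
  apply bigAnd_noNames
  intro φ hφ
  rw [List.mem_map] at hφ
  obtain ⟨ψ, hψ, rfl⟩ := hφ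
  exact ⟨h _ (List.mem_of_mem_eraseIdx hψ), trivial⟩

theorem isTangle_closed {φ : MuForm P} (h : IsTangle φ) :
    φ.varsBelow 0 ∧ φ.noNames := by
  induction h with
  | tru => exact ⟨trivial, trivial⟩
  | prop p => exact ⟨trivial, trivial⟩
  | neg _ ih => exact ⟨varsBelow_neg _ 0 ih.1, noNames_neg _ ih.2⟩
  | and _ _ ih1 ih2 => exact ⟨⟨ih1.1, ih2.1⟩, ⟨ih1.2, ih2.2⟩⟩
  | or _ _ ih1 ih2 => exact ⟨⟨ih1.1, ih2.1⟩, ⟨ih1.2, ih2.2⟩⟩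
  | dia _ ih => exact ih
  | box _ ih => exact ih
  | tangle Γ _ ih =>
      exact ⟨tangleForm_varsBelow (fun φ hφ => (ih φ hφ).1),
        tangleForm_noNames (fun φ hφ => (ih φ hφ).2)⟩

/-- Satisfaction of negation for closed, name-free formulas. -/
theorem sat_neg_closed (M : KModel W P) {φ : MuForm P} (hv : φ.varsBelow 0)
    (hn : φ.noNames) (w : W) : M.Sat w (MuForm.neg φ) ↔ ¬ M.Sat w φ := by
  have h1 : (MuForm.neg φ).sat M (fun _ => (∅ : Set W)) =
      (MuForm.neg φ).sat M (fun n => ((fun _ => (∅ : Set W)) n)ᶜ) :=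
    satCongr M _ 0 _ _ (varsBelow_neg _ 0 hv) (fun n hn => absurd hn (Nat.not_lt_zero n))
  show w ∈ _ ↔ _
  rw [KModel.Sat, h1, sat_neg M φ hn]
  exact Iff.rfl

end TangledMu

namespace TangledMu

variable {W P : Type}

theorem mem_sat_bigOr (M : KModel W P) (l : List (MuForm P)) (e : Nat → Set W) (w : W) :
    w ∈ (bigOr l).sat M e ↔ ∃ φ ∈ l, w ∈ φ.sat M e := by
  induction l with
  | nil =>
      simp only [bigOr, MuForm.sat]
      constructor
      · intro h
        have : w ∈ (∅ : Set W) := h ∅ (fun z hz => hz)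
        exact this.elim
      · rintro ⟨φ, h, _⟩
        exact absurd h List.not_mem_nil
  | cons a l ih =>
      cases l with
      | nil =>
          simp only [bigOr, List.mem_singleton]
          constructor
          · intro h; exact ⟨a, rfl, h⟩
          · rintro ⟨φ, rfl, h⟩; exact h
      | cons b l' =>
          simp only [bigOr, MuForm.sat, Set.mem_union, ih, List.mem_cons]
          constructor
          · rintro (h | ⟨φ, hm, h⟩)
            · exact ⟨a, Or.inl rfl, h⟩
            · exact ⟨φ, Or.inr hm, h⟩
          · rintro ⟨φ, (rfl | hm), h⟩
            · exact Or.inl h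
            · exact Or.inr ⟨φ, hm, h⟩

theorem mem_sat_bigAnd (M : KModel W P) (l : List (MuForm P)) (e : Nat → Set W) (w : W) :
    w ∈ (bigAnd l).sat M e ↔ ∀ φ ∈ l, w ∈ φ.sat M e := by
  induction l with
  | nil =>
      simp only [bigAnd, MuForm.sat, Set.mem_univ, true_iff]
      intro φ h
      exact absurd h List.not_mem_nil
  | cons a l ih =>
      cases l with
      | nil =>
          simp only [bigAnd, List.mem_singleton]
          constructor
          · intro h φ hφ; rw [hφ]; exact h
          · intro h; exact h a rfl
      | cons b l' =>
          simp only [bigAnd, MuForm.sat, Set.mem_inter_iff, ih, List.mem_cons]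
          constructor
          · rintro ⟨h1, h2⟩ φ (rfl | hm)
            · exact h1
            · exact h2 φ hm
          · intro h
            exact ⟨h a (Or.inl rfl), fun φ hm => h φ (Or.inr hm)⟩

private lemma erase_forall (Γ : List (MuForm P)) (i : Fin Γ.length) (Q : MuForm P → Prop) :
    (∀ ψ ∈ Γ.eraseIdx i, Q ψ) ↔ ∀ j : Fin Γ.length, j ≠ i → Q (Γ.get j) := by
  constructor
  · intro h j hj
    apply h
    rw [List.mem_eraseIdx_iff_getElem]
    exact ⟨j, j.2, fun hc => hj (Fin.ext hc), rfl⟩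
  · intro h ψ hψ
    rw [List.mem_eraseIdx_iff_getElem] at hψ
    obtain ⟨j, hne, rfl⟩ : ∃ j : Fin Γ.length, (j : ℕ) ≠ i ∧ Γ.get j = ψ := by
      obtain ⟨j, hj, hne, he⟩ := hψ; exact ⟨⟨j, hj⟩, hne, he⟩
    exact h j (fun he => hne (by rw [he]))

theorem mem_sat_tangleDisj (M : KModel W P) (Γ : List (MuForm P))
    (hv : ∀ φ ∈ Γ, φ.varsBelow 0) (i : Nat) (hi : i < Γ.length) (X : Set W) (w : W) :
    w ∈ (tangleDisj Γ i).sat M (envCons X (fun _ => ∅)) ↔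
      ((∃ u, (w = u ∨ M.rel w u) ∧ u ∈ (Γ.get ⟨i, hi⟩).sat M (fun _ => ∅) ∧ u ∈ X) ∧
       (∀ j : Fin Γ.length, (j : ℕ) ≠ i →
          ∃ u, M.rel w u ∧ u ∈ (Γ.get j).sat M (fun _ => ∅) ∧ u ∈ X)) := by
  have closedEq : ∀ ψ ∈ Γ, ψ.sat M (envCons X (fun _ => ∅)) = ψ.sat M (fun _ => ∅) :=
    fun ψ hψ => satCongr M ψ 0 _ _ (hv ψ hψ) (fun n hn => absurd hn (Nat.not_lt_zero n))
  have hgetD : (Γ.getD i .tru).sat M (envCons X (fun _ => ∅)) =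
      (Γ.get ⟨i, hi⟩).sat M (fun _ => ∅) := by
    rw [List.getD_eq_getElem _ _ hi]
    rw [closedEq _ (List.getElem_mem hi)]
    rw [List.get_eq_getElem]
  have hχ : ∀ u, u ∈ (MuForm.and (Γ.getD i .tru) (.var 0)).sat M (envCons X (fun _ => ∅)) ↔
      (u ∈ (Γ.get ⟨i, hi⟩).sat M (fun _ => ∅) ∧ u ∈ X) := by
    intro u
    show u ∈ _ ∩ _ ↔ _
    rw [Set.mem_inter_iff, hgetD]
    exact Iff.rfl
  show w ∈ _ ∩ _ ↔ _
  rw [Set.mem_inter_iff]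
  constructor
  · rintro ⟨h1, h2⟩
    constructor
    · rcases h1 with h1 | ⟨u, hu1, hu2⟩
      · exact ⟨w, Or.inl rfl, (hχ w).mp h1⟩
      · exact ⟨u, Or.inr hu1, (hχ u).mp hu2⟩
    · intro j hj
      rw [mem_sat_bigAnd] at h2
      have := h2 (MuForm.dia (MuForm.and (Γ.get j) (.var 0)))
        (by
          rw [List.mem_map]
          refine ⟨Γ.get j, ?_, rfl⟩
          rw [List.mem_eraseIdx_iff_getElem]
          exact ⟨j, j.2, hj, rfl⟩)
      obtain ⟨u, hu1, hu2⟩ := this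
      refine ⟨u, hu1, ?_⟩
      have : u ∈ _ ∩ _ := hu2
      rw [Set.mem_inter_iff, closedEq _ (List.get_mem Γ j)] at this
      exact this
  · rintro ⟨⟨u, hu1, hu2⟩, h2⟩
    constructor
    · rcases hu1 with heq | hu1
      · have := (hχ u).mpr hu2
        rw [← heq] at this
        exact Or.inl this
      · exact Or.inr ⟨u, hu1, (hχ u).mpr hu2⟩
    · rw [mem_sat_bigAnd]
      intro φ hφ
      rw [List.mem_map] at hφ
      obtain ⟨ψ, hψ, rfl⟩ := hφ
      rw [List.mem_eraseIdx_iff_getElem] at hψ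
      obtain ⟨j, hne, rfl⟩ : ∃ j : Fin Γ.length, (j : ℕ) ≠ i ∧ Γ.get j = ψ := by
        obtain ⟨j, hj, hne, he⟩ := hψ; exact ⟨⟨j, hj⟩, hne, he⟩
      obtain ⟨u', hu'1, hu'2, hu'3⟩ := h2 j hne
      refine ⟨u', hu'1, ?_⟩
      show u' ∈ _ ∩ _
      rw [Set.mem_inter_iff, closedEq _ (List.get_mem Γ j)]
      exact ⟨hu'2, hu'3⟩

theorem mem_F_iff (M : KModel W P) (Γ : List (MuForm P))
    (hv : ∀ φ ∈ Γ, φ.varsBelow 0) (X : Set W) (w : W) :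
    w ∈ (bigOr ((List.range Γ.length).map (tangleDisj Γ))).sat M
        (envCons X (fun _ => ∅)) ↔
      ∃ i : Fin Γ.length,
        (∃ u, (w = u ∨ M.rel w u) ∧ u ∈ (Γ.get i).sat M (fun _ => ∅) ∧ u ∈ X) ∧
        (∀ j : Fin Γ.length, j ≠ i →
          ∃ u, M.rel w u ∧ u ∈ (Γ.get j).sat M (fun _ => ∅) ∧ u ∈ X) := by
  rw [mem_sat_bigOr]
  constructor
  · rintro ⟨φ, hmem, hsat⟩
    rw [List.mem_map] at hmem
    obtain ⟨i, hi, rfl⟩ := hmem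
    rw [List.mem_range] at hi
    rw [mem_sat_tangleDisj M Γ hv i hi] at hsat
    refine ⟨⟨i, hi⟩, hsat.1, ?_⟩
    intro j hj
    exact hsat.2 j (fun hc => hj (Fin.ext hc))
  · rintro ⟨i, h1, h2⟩
    refine ⟨tangleDisj Γ i, ?_, ?_⟩
    · rw [List.mem_map]
      exact ⟨i, List.mem_range.mpr i.2, rfl⟩
    · rw [mem_sat_tangleDisj M Γ hv i i.2]
      refine ⟨h1, ?_⟩
      intro j hj
      exact h2 j (fun hc => hj (by rw [hc]))

end TangledMu

namespace TangledMu

variable {W P : Type}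

/-- The first-order-style witness configuration for the tangle. -/
def Tangled (M : KModel W P) {k : ℕ} (A : Fin k → Set W) (w : W) : Prop :=
  ∃ t s : Fin k → W,
    (∀ m, t m ∈ A m ∧ s m ∈ A m) ∧
    (∀ a b : W, (∃ m, a = t m ∨ a = s m) → (∃ m, b = t m ∨ b = s m) → a ≠ b → M.rel a b) ∧
    (∀ m m' : Fin k, m ≠ m' → t m = s m → ¬ M.rel (t m) (t m) → t m' = s m' →
      ¬ M.rel (t m') (t m') → t m ≠ t m') ∧
    (∀ m, (M.rel w (t m) ∨ w = t m) ∧ (M.rel w (s m) ∨ w = s m))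

theorem rle_trans {M : KModel W P} (hwk : WeaklyTransitive M.rel) {a b c : W}
    (h1 : M.rle a b) (h2 : M.rle b c) : M.rle a c := by
  rcases h1 with rfl | h1
  · exact h2
  rcases h2 with rfl | h2
  · exact Or.inr h1
  by_cases hac : a = c
  · exact Or.inl hac
  · exact Or.inr (hwk a b c hac h1 h2)

theorem tangled_down {M : KModel W P} (hwk : WeaklyTransitive M.rel) {k : ℕ}
    {A : Fin k → Set W} {v x : W} (hvx : M.rle v x) (h : Tangled M A x) :
    Tangled M A v := by
  obtain ⟨t, s, h1, h2, h3, h4⟩ := h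
  refine ⟨t, s, h1, h2, h3, ?_⟩
  have key : ∀ y : W, (M.rel x y ∨ x = y) → (M.rel v y ∨ v = y) := by
    intro y hy
    rcases hvx with rfl | hvx
    · exact hy
    rcases hy with hy | rfl
    · by_cases hvy : v = y
      · exact Or.inr hvy
      · exact Or.inl (hwk v x y hvy hvx hy)
    · exact Or.inl hvx
  intro m
  exact ⟨key _ (h4 m).1, key _ (h4 m).2⟩

theorem sat_tangleForm_iff (M : KModel W P) (hwk : WeaklyTransitive M.rel)
    (hpf : PathFinite M) (Γ : List (MuForm P)) (hv : ∀ φ ∈ Γ, φ.varsBelow 0)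
    (hn : ∀ φ ∈ Γ, φ.noNames) (hk : 0 < Γ.length) (w : W) :
    M.Sat w (tangleForm Γ) ↔
      Tangled M (fun m : Fin Γ.length => (Γ.get m).sat M (fun _ => ∅)) w := by
  set e0 : Nat → Set W := (fun _ => (∅ : Set W)) with he0
  set body := bigOr ((List.range Γ.length).map (tangleDisj Γ)) with hbody
  set A : Fin Γ.length → Set W := fun m => (Γ.get m).sat M e0 with hA
  have hbodyNN : body.noNames := tangleForm_noNames hn
  -- the greatest fixed point
  set ν : Set W := (tangleForm Γ).sat M e0 with hν
  have hν_def : ν = ⋃₀ {X : Set W | X ⊆ body.sat M (envCons X e0)} := rfl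
  have hcoind : ∀ X : Set W, X ⊆ body.sat M (envCons X e0) → X ⊆ ν := by
    intro X hX x hx
    rw [hν_def]
    exact ⟨X, hX, hx⟩
  have hpost : ∀ x ∈ ν, x ∈ body.sat M (envCons ν e0) := by
    intro x hx
    rw [hν_def] at hx
    obtain ⟨X, hX, hxX⟩ := hx
    refine sat_mono M body hbodyNN (envCons X e0) (envCons ν e0) ?_ (hX hxX)
    intro n
    cases n with
    | zero => exact hcoind X hX
    | succ m => exact subset_rfl
  constructor
  · -- hard direction: satisfaction implies the witness configuration
    intro hsat
    -- cluster of a point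
    set cl : W → Set W := fun x => {u | M.rle x u ∧ M.rle u x} with hcl
    have hclus : ∀ x, IsCluster M (cl x) := by
      intro x u hu v' hv'
      exact rle_trans hwk hu.2 hv'.1
    have hself : ∀ x, x ∈ cl x := fun x => ⟨Or.inl rfl, Or.inl rfl⟩
    have hesc : ∀ v u : W, M.rle v u → ¬ M.rle u v → Prec M (cl v) (cl u) := by
      intro v u hvu hnuv x hx
      refine ⟨v, hself v, ?_, ?_⟩
      · have hvx : M.rle v x := rle_trans hwk hvu hx.1
        rcases hvx with rfl | hvx
        · exact absurd hx.1 hnuv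
        · exact hvx
      · intro hc
        exact hnuv (rle_trans hwk hx.1 (Or.inr hc))
    have main : ∀ v, v ∈ ν → Tangled M A v := by
      have key : ∀ C : Set W, ∀ v, v ∈ ν → cl v = C → Tangled M A v := by
        intro C
        induction C using WellFounded.induction hpf with
        | _ C ih =>
        intro v hvν hclv
        subst hclv
        by_cases hE : ∃ u, u ∈ ν ∧ M.rle v u ∧ ¬ M.rle u v
        · obtain ⟨u, huν, hvu, hnuv⟩ := hE
          have hTu : Tangled M A u :=
            ih (cl u) ⟨hclus v, hclus u, ⟨v, hself v⟩, ⟨u, hself u⟩, hesc v u hvu hnuv⟩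
              u huν rfl
          exact tangled_down hwk hvu hTu
        · push_neg at hE
          -- trapped in the cluster of v
          set B : Fin Γ.length → Set W := fun j => A j ∩ ν ∩ cl v with hB
          have hstep : ∀ x, x ∈ ν → M.rle v x →
              ∃ i : Fin Γ.length, (∃ u ∈ B i, M.rle x u) ∧
                ∀ j, j ≠ i → ∃ u ∈ B j, M.rel x u := by
            intro x hxν hvx
            have := hpost x hxν
            rw [hbody, mem_F_iff M Γ hv ν x] at this
            obtain ⟨i, ⟨u, hu1, hu2, hu3⟩, hstr⟩ := this
            have hmem : ∀ u' : W, u' ∈ ν → M.rle x u' → ∀ j : Fin Γ.length,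
                u' ∈ (Γ.get j).sat M e0 → u' ∈ B j := by
              intro u' hu'ν hxu' j hsatj
              have hvu' : M.rle v u' := rle_trans hwk hvx hxu'
              exact ⟨⟨hsatj, hu'ν⟩, hvu', hE u' hu'ν hvu'⟩
            refine ⟨i, ⟨u, hmem u hu3 hu1 i hu2, hu1⟩, ?_⟩
            intro j hj
            obtain ⟨u', hu'1, hu'2, hu'3⟩ := hstr j hj
            exact ⟨u', hmem u' hu'3 (Or.inr hu'1) j hu'2, hu'1⟩
          -- every B j is nonempty
          have hBne : ∀ j : Fin Γ.length, ∃ z, z ∈ B j := by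
            obtain ⟨i₀, ⟨u₀, hu₀, _⟩, hstr₀⟩ := hstep v hvν (Or.inl rfl)
            intro j
            by_cases hji : j = i₀
            · exact ⟨u₀, hji ▸ hu₀⟩
            · obtain ⟨u, hu, _⟩ := hstr₀ j hji
              exact ⟨u, hu⟩
          -- choose the pairs
          have hchoice : ∀ j : Fin Γ.length, ∃ a b : W, a ∈ B j ∧ b ∈ B j ∧
              ((a = b ∧ ¬ M.rel a a) → ∀ c ∈ B j, c = a) := by
            intro j
            by_cases hp : ∃ a ∈ B j, ∃ b ∈ B j, a ≠ b ∨ M.rel a a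
            · obtain ⟨a, ha, b, hb, hab⟩ := hp
              rcases hab with hab | haa
              · exact ⟨a, b, ha, hb, fun h => absurd h.1 hab⟩
              · exact ⟨a, a, ha, ha, fun h => absurd haa h.2⟩
            · push_neg at hp
              obtain ⟨z, hz⟩ := hBne j
              exact ⟨z, z, hz, hz, fun _ c hc => (hp c hc z hz).1⟩
          choose t s hts1 hts2 hts3 using hchoice
          have hclB : ∀ j, ∀ z ∈ B j, z ∈ cl v := fun j z hz => hz.2
          have hνB : ∀ j, ∀ z ∈ B j, z ∈ ν := fun j z hz => hz.1.2
          refine ⟨t, s, ?_, ?_, ?_, ?_⟩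
          · exact fun m => ⟨(hts1 m).1.1, (hts2 m).1.1⟩
          · rintro a b ⟨m, hma⟩ ⟨m', hmb⟩ hab
            have haC : a ∈ cl v := by
              rcases hma with rfl | rfl
              · exact hclB m _ (hts1 m)
              · exact hclB m _ (hts2 m)
            have hbC : b ∈ cl v := by
              rcases hmb with rfl | rfl
              · exact hclB m' _ (hts1 m')
              · exact hclB m' _ (hts2 m')
            rcases hclus v a haC b hbC with heq | hrel
            · exact absurd heq hab
            · exact hrel
          · intro m m' hmm' h1 h2 h3 h4 heq
            have hsingm : ∀ c ∈ B m, c = t m := hts3 m ⟨h1, h2⟩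
            have hsingm' : ∀ c ∈ B m', c = t m' := hts3 m' ⟨h3, h4⟩
            have htν : t m ∈ ν := hνB m _ (hts1 m)
            have htC : t m ∈ cl v := hclB m _ (hts1 m)
            obtain ⟨iz, hdot, hstr⟩ := hstep (t m) htν htC.1
            by_cases hmi : m = iz
            · obtain ⟨u, huB, hurel⟩ := hstr m' (fun hc => hmm' (hmi.trans hc.symm))
              have : u = t m' := hsingm' u huB
              rw [this, ← heq] at hurel
              exact h2 hurel
            · obtain ⟨u, huB, hurel⟩ := hstr m hmi
              have : u = t m := hsingm u huB
              rw [this] at hurel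
              exact h2 hurel
          · intro m
            have h1 := (hclB m _ (hts1 m)).1
            have h2 := (hclB m _ (hts2 m)).1
            constructor
            · rcases h1 with heq | hrel
              · exact Or.inr heq
              · exact Or.inl hrel
            · rcases h2 with heq | hrel
              · exact Or.inr heq
              · exact Or.inl hrel
      intro v hvν
      exact key (cl v) v hvν rfl
    exact main w hsat
  · -- easy direction: the witness configuration implies satisfaction
    rintro ⟨t, s, hmem, hpair, hcrit, hbase⟩
    set X₀ : Set W := {x | x = w ∨ ∃ m, x = t m ∨ x = s m} with hX₀
    have hwX₀ : w ∈ X₀ := Or.inl rfl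
    have hptX₀ : ∀ m, t m ∈ X₀ ∧ s m ∈ X₀ := fun m =>
      ⟨Or.inr ⟨m, Or.inl rfl⟩, Or.inr ⟨m, Or.inr rfl⟩⟩
    have hpostX₀ : X₀ ⊆ body.sat M (envCons X₀ e0) := by
      intro y hy
      -- basic relational facts about y
      have hy1 : ∀ j, (M.rel y (t j) ∨ y = t j) ∧ (M.rel y (s j) ∨ y = s j) := by
        rcases hy with rfl | ⟨m, hm⟩
        · exact hbase
        · intro j
          have hyp : ∃ m', y = t m' ∨ y = s m' := ⟨m, hm⟩
          constructor
          · by_cases he : y = t j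
            · exact Or.inr he
            · exact Or.inl (hpair y (t j) hyp ⟨j, Or.inl rfl⟩ he)
          · by_cases he : y = s j
            · exact Or.inr he
            · exact Or.inl (hpair y (s j) hyp ⟨j, Or.inr rfl⟩ he)
      rw [hbody, mem_F_iff M Γ hv X₀ y]
      by_cases hcase : ∃ j0, t j0 = y ∧ s j0 = y ∧ ¬ M.rel y y
      · obtain ⟨j0, hj1, hj2, hj3⟩ := hcase
        refine ⟨j0, ⟨y, Or.inl rfl, ?_, hy⟩, ?_⟩
        · rw [← hj1]; exact (hmem j0).1
        · intro j hj
          by_cases h1 : t j = y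
          · by_cases h2 : s j = y
            · exfalso
              refine hcrit j0 j (fun hc => hj (hc.symm)) (hj1.trans hj2.symm) ?_
                (h1.trans h2.symm) ?_ (by rw [hj1, h1])
              · rw [hj1]; exact hj3
              · rw [h1]; exact hj3
            · refine ⟨s j, ?_, (hmem j).2, (hptX₀ j).2⟩
              exact hpair y (s j) ⟨j0, Or.inl hj1.symm⟩ ⟨j, Or.inr rfl⟩
                (fun hc => h2 hc.symm)
          · refine ⟨t j, ?_, (hmem j).1, (hptX₀ j).1⟩
            exact hpair y (t j) ⟨j0, Or.inl hj1.symm⟩ ⟨j, Or.inl rfl⟩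
              (fun hc => h1 hc.symm)
      · push_neg at hcase
        have hstrict : ∀ j : Fin Γ.length,
            ∃ u, M.rel y u ∧ u ∈ (Γ.get j).sat M e0 ∧ u ∈ X₀ := by
          intro j
          rcases (hy1 j).1 with hrel | heq
          · exact ⟨t j, hrel, (hmem j).1, (hptX₀ j).1⟩
          · rcases (hy1 j).2 with hrel | heq'
            · exact ⟨s j, hrel, (hmem j).2, (hptX₀ j).2⟩
            · have hrelyy : M.rel y y := hcase j heq.symm heq'.symm
              refine ⟨y, hrelyy, ?_, hy⟩
              rw [heq]; exact (hmem j).1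
        refine ⟨⟨0, hk⟩, ?_, ?_⟩
        · obtain ⟨u, hu1, hu2, hu3⟩ := hstrict ⟨0, hk⟩
          exact ⟨u, Or.inr hu1, hu2, hu3⟩
        · intro j _
          exact hstrict j
    exact hcoind X₀ hpostX₀ hwX₀

end TangledMu

namespace TangledMu

open FirstOrder Language

variable {W P : Type}

/-- Atomic formula for the accessibility relation. -/
def rT {n : ℕ} (t₁ t₂ : (folLang P).Term ((Fin 1) ⊕ (Fin n))) :
    (folLang P).BoundedFormula (Fin 1) n :=
  Relations.boundedFormula₂ (PUnit.unit : (folLang P).Relations 2) t₁ t₂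

/-- Atomic formula for a propositional constant. -/
def pT {n : ℕ} (p : P) (t : (folLang P).Term ((Fin 1) ⊕ (Fin n))) :
    (folLang P).BoundedFormula (Fin 1) n :=
  Relations.boundedFormula₁ (p : (folLang P).Relations 1) t

/-- Finite conjunction of bounded formulas. -/
def andB {n : ℕ} (l : List ((folLang P).BoundedFormula (Fin 1) n)) :
    (folLang P).BoundedFormula (Fin 1) n :=
  l.foldr (· ⊓ ·) ⊤

section Realize

variable (M : KModel W P)

theorem realize_rT {n : ℕ} (v : Fin 1 → W) (xs : Fin n → W)
    (t₁ t₂ : (folLang P).Term ((Fin 1) ⊕ (Fin n))) :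
    @BoundedFormula.Realize (folLang P) W (folStr M) _ _ (rT t₁ t₂) v xs ↔
      M.rel (@Term.realize (folLang P) W (folStr M) _ (Sum.elim v xs) t₁)
        (@Term.realize (folLang P) W (folStr M) _ (Sum.elim v xs) t₂) := by
  letI : (folLang P).Structure W := folStr M
  rw [rT]
  rfl

theorem realize_pT {n : ℕ} (v : Fin 1 → W) (xs : Fin n → W) (p : P)
    (t : (folLang P).Term ((Fin 1) ⊕ (Fin n))) :
    @BoundedFormula.Realize (folLang P) W (folStr M) _ _ (pT p t) v xs ↔
      (@Term.realize (folLang P) W (folStr M) _ (Sum.elim v xs) t) ∈ M.val p := by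
  letI : (folLang P).Structure W := folStr M
  rw [pT]
  rfl

theorem realize_andB {n : ℕ} (v : Fin 1 → W) (xs : Fin n → W)
    (l : List ((folLang P).BoundedFormula (Fin 1) n)) :
    @BoundedFormula.Realize (folLang P) W (folStr M) _ _ (andB l) v xs ↔
      ∀ φ ∈ l, @BoundedFormula.Realize (folLang P) W (folStr M) _ _ φ v xs := by
  letI : (folLang P).Structure W := folStr M
  induction l with
  | nil =>
      simp only [andB, List.foldr_nil, BoundedFormula.realize_top, true_iff]
      intro φ h
      exact absurd h List.not_mem_nil
  | cons a l ih =>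
      simp only [andB, List.foldr_cons, BoundedFormula.realize_inf, List.mem_cons] at *
      constructor
      · rintro ⟨h1, h2⟩ φ (rfl | hm)
        · exact h1
        · exact ih.mp h2 φ hm
      · intro h
        exact ⟨h a (Or.inl rfl), ih.mpr (fun φ hm => h φ (Or.inr hm))⟩

/-- Realization of a relabeled 1-variable formula at a bound variable. -/
theorem realize_at {n : ℕ} (θ : (folLang P).Formula (Fin 1)) (i : Fin n)
    (v : Fin 1 → W) (xs : Fin n → W) :
    @BoundedFormula.Realize (folLang P) W (folStr M) _ _
      (BoundedFormula.relabel (fun _ : Fin 1 => Sum.inr i) θ) v xs ↔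
      FOSat M θ (xs i) := by
  letI : (folLang P).Structure W := folStr M
  rw [BoundedFormula.realize_relabel]
  show BoundedFormula.Realize θ _ _ ↔ _
  rw [FOSat, Formula.Realize]
  have he : (xs ∘ Fin.natAdd n : Fin 0 → W) = default := funext (fun x => x.elim0)
  rw [he]
  constructor
  · intro hh
    convert hh using 2
    rfl
  · intro hh
    convert hh using 2
    rfl

end Realize

end TangledMu

namespace TangledMu

open FirstOrder Language

variable {W P : Type}

def tIdx (k : ℕ) (m : Fin k) : Fin (k + k) := Fin.castAdd k m
def sIdx (k : ℕ) (m : Fin k) : Fin (k + k) := Fin.natAdd k m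

def xT {n : ℕ} : (folLang P).Term ((Fin 1) ⊕ (Fin n)) := Term.var (Sum.inl 0)
def vT {n : ℕ} (i : Fin n) : (folLang P).Term ((Fin 1) ⊕ (Fin n)) := Term.var (Sum.inr i)

def critB (k : ℕ) (m : Fin k) : (folLang P).BoundedFormula (Fin 1) (k + k) :=
  Term.bdEqual (vT (tIdx k m)) (vT (sIdx k m)) ⊓ (rT (vT (tIdx k m)) (vT (tIdx k m))).not

/-- The first-order translation of the tangle. -/
def tangleFO (k : ℕ) (θ : Fin k → (folLang P).Formula (Fin 1)) :
    (folLang P).Formula (Fin 1) :=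
  (andB (
    ((List.finRange k).map fun m =>
      BoundedFormula.relabel (fun _ : Fin 1 => Sum.inr (tIdx k m)) (θ m)) ++
    ((List.finRange k).map fun m =>
      BoundedFormula.relabel (fun _ : Fin 1 => Sum.inr (sIdx k m)) (θ m)) ++
    (((List.finRange (k+k)).product (List.finRange (k+k))).map fun p =>
        Term.bdEqual (vT p.1) (vT p.2) ⊔ rT (vT p.1) (vT p.2)) ++
    (((List.finRange k).product (List.finRange k)).map fun p =>
        if p.1 = p.2 then ⊤ else
          (critB k p.1 ⊓ critB k p.2 ⊓
            Term.bdEqual (vT (tIdx k p.1)) (vT (tIdx k p.2))).not) ++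
    ((List.finRange (k+k)).map fun i => rT xT (vT i) ⊔ Term.bdEqual xT (vT i)))).exs

private lemma idx_surj (k : ℕ) (i : Fin (k + k)) :
    ∃ m : Fin k, i = tIdx k m ∨ i = sIdx k m := by
  refine Fin.addCases (motive := fun i => ∃ m : Fin k, i = tIdx k m ∨ i = sIdx k m) ?_ ?_ i
  · intro m; exact ⟨m, Or.inl rfl⟩
  · intro m; exact ⟨m, Or.inr rfl⟩

theorem realize_rT_xv {n : ℕ} (M : KModel W P) (v : Fin 1 → W) (xs : Fin n → W) (i : Fin n) :
    @BoundedFormula.Realize (folLang P) W (folStr M) _ _ (rT xT (vT i)) v xs ↔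
      M.rel (v 0) (xs i) := by
  rw [realize_rT]
  exact Iff.rfl

theorem realize_tangleFO (k : ℕ) (θ : Fin k → (folLang P).Formula (Fin 1))
    (M : KModel W P) (w : W) :
    FOSat M (tangleFO k θ) w ↔
      Tangled M (fun m : Fin k => {u | FOSat M (θ m) u}) w := by
  letI : (folLang P).Structure W := folStr M
  have hreal : FOSat M (tangleFO k θ) w ↔ ∃ xs : Fin (k + k) → W,
      @BoundedFormula.Realize (folLang P) W (folStr M) _ _
        (andB (
    ((List.finRange k).map fun m =>
      BoundedFormula.relabel (fun _ : Fin 1 => Sum.inr (tIdx k m)) (θ m)) ++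
    ((List.finRange k).map fun m =>
      BoundedFormula.relabel (fun _ : Fin 1 => Sum.inr (sIdx k m)) (θ m)) ++
    (((List.finRange (k+k)).product (List.finRange (k+k))).map fun p =>
        Term.bdEqual (vT p.1) (vT p.2) ⊔ rT (vT p.1) (vT p.2)) ++
    (((List.finRange k).product (List.finRange k)).map fun p =>
        if p.1 = p.2 then ⊤ else
          (critB k p.1 ⊓ critB k p.2 ⊓
            Term.bdEqual (vT (tIdx k p.1)) (vT (tIdx k p.2))).not) ++
    ((List.finRange (k+k)).map fun i => rT xT (vT i) ⊔ Term.bdEqual xT (vT i))))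
        (fun _ => w) xs :=
    BoundedFormula.realize_exs
  rw [hreal]
  have hterm : ∀ (xs : Fin (k+k) → W) (i : Fin (k+k)),
      @Term.realize (folLang P) W (folStr M) _ (Sum.elim (fun _ : Fin 1 => w) xs)
        (vT i) = xs i := fun _ _ => rfl
  have htermx : ∀ (xs : Fin (k+k) → W),
      @Term.realize (folLang P) W (folStr M) _ (Sum.elim (fun _ : Fin 1 => w) xs)
        (xT (P := P)) = w := fun _ => rfl
  constructor
  · rintro ⟨xs, hxs⟩
    rw [realize_andB] at hxs
    refine ⟨fun m => xs (tIdx k m), fun m => xs (sIdx k m), ?_, ?_, ?_, ?_⟩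
    · intro m
      constructor
      · have := hxs (BoundedFormula.relabel (fun _ : Fin 1 => Sum.inr (tIdx k m)) (θ m))
          (by
            simp only [List.mem_append, List.mem_map]
            exact Or.inl (Or.inl (Or.inl (Or.inl ⟨m, List.mem_finRange m, rfl⟩))))
        rw [realize_at] at this
        exact this
      · have := hxs (BoundedFormula.relabel (fun _ : Fin 1 => Sum.inr (sIdx k m)) (θ m))
          (by
            simp only [List.mem_append, List.mem_map]
            exact Or.inl (Or.inl (Or.inl (Or.inr ⟨m, List.mem_finRange m, rfl⟩))))
        rw [realize_at] at this
        exact this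
    · rintro a b ⟨m, ha⟩ ⟨m', hb⟩ hab
      have hia : ∃ i : Fin (k+k), a = xs i := by
        rcases ha with rfl | rfl
        · exact ⟨tIdx k m, rfl⟩
        · exact ⟨sIdx k m, rfl⟩
      have hib : ∃ i : Fin (k+k), b = xs i := by
        rcases hb with rfl | rfl
        · exact ⟨tIdx k m', rfl⟩
        · exact ⟨sIdx k m', rfl⟩
      obtain ⟨i, rfl⟩ := hia
      obtain ⟨j, rfl⟩ := hib
      have := hxs (Term.bdEqual (vT i) (vT j) ⊔ rT (vT i) (vT j))
        (by
          simp only [List.mem_append, List.mem_map]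
          exact Or.inl (Or.inl (Or.inr
            ⟨(i, j), List.mem_product.mpr ⟨List.mem_finRange i, List.mem_finRange j⟩, rfl⟩)))
      simp only [BoundedFormula.realize_sup, BoundedFormula.realize_bdEqual, realize_rT,
        hterm] at this
      rcases this with heq | hrel
      · exact absurd heq hab
      · exact hrel
    · intro m m' hmm' h1 h2 h3 h4 heq
      have := hxs ((critB k m ⊓ critB k m' ⊓
            Term.bdEqual (vT (tIdx k m)) (vT (tIdx k m'))).not)
        (by
          simp only [List.mem_append, List.mem_map]
          refine Or.inl (Or.inr ⟨(m, m'),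
            List.mem_product.mpr ⟨List.mem_finRange m, List.mem_finRange m'⟩, ?_⟩)
          rw [if_neg hmm'])
      simp only [critB, BoundedFormula.realize_not, BoundedFormula.realize_inf,
        BoundedFormula.realize_bdEqual, realize_rT, hterm] at this
      exact this ⟨⟨⟨h1, h2⟩, h3, h4⟩, heq⟩
    · intro m
      have hbase : ∀ i : Fin (k+k), M.rel w (xs i) ∨ w = xs i := by
        intro i
        have := hxs (rT xT (vT i) ⊔ Term.bdEqual xT (vT i))
          (by
            simp only [List.mem_append, List.mem_map]
            exact Or.inr ⟨i, List.mem_finRange i, rfl⟩)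
        simp only [BoundedFormula.realize_sup, BoundedFormula.realize_bdEqual, realize_rT,
          hterm, htermx] at this
        exact this
      exact ⟨hbase (tIdx k m), hbase (sIdx k m)⟩
  · rintro ⟨t, s, h1, h2, h3, h4⟩
    refine ⟨fun i => Fin.addCases t s i, ?_⟩
    set xs : Fin (k+k) → W := fun i => Fin.addCases t s i with hxs
    have hxst : ∀ m : Fin k, xs (tIdx k m) = t m := fun m => Fin.addCases_left m
    have hxss : ∀ m : Fin k, xs (sIdx k m) = s m := fun m => Fin.addCases_right m
    have hpt : ∀ i : Fin (k+k), ∃ m : Fin k, xs i = t m ∨ xs i = s m := by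
      intro i
      obtain ⟨m, hm | hm⟩ := idx_surj k i
      · exact ⟨m, Or.inl (by rw [hm, hxst])⟩
      · exact ⟨m, Or.inr (by rw [hm, hxss])⟩
    rw [realize_andB]
    intro φ hφ
    simp only [List.mem_append, List.mem_map] at hφ
    rcases hφ with ((((⟨m, _, rfl⟩ | ⟨m, _, rfl⟩) | ⟨p, hp, rfl⟩) | ⟨p, hp, rfl⟩) | ⟨i, _, rfl⟩)
    · rw [realize_at, hxst]
      exact (h1 m).1
    · rw [realize_at, hxss]
      exact (h1 m).2
    · simp only [BoundedFormula.realize_sup, BoundedFormula.realize_bdEqual, realize_rT,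
        hterm]
      by_cases he : xs p.1 = xs p.2
      · exact Or.inl he
      · refine Or.inr (h2 _ _ ?_ ?_ he)
        · obtain ⟨m, hm⟩ := hpt p.1
          exact ⟨m, hm⟩
        · obtain ⟨m, hm⟩ := hpt p.2
          exact ⟨m, hm⟩
    · by_cases hpe : p.1 = p.2
      · rw [if_pos hpe]
        exact BoundedFormula.realize_top.mpr trivial
      · rw [if_neg hpe]
        simp only [critB, BoundedFormula.realize_not, BoundedFormula.realize_inf,
          BoundedFormula.realize_bdEqual, realize_rT, hterm, hxst, hxss]
        rintro ⟨⟨⟨hc1, hc2⟩, hc3, hc4⟩, hc5⟩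
        exact h3 p.1 p.2 hpe hc1 hc2 hc3 hc4 hc5
    · simp only [BoundedFormula.realize_sup, BoundedFormula.realize_bdEqual, realize_rT,
        hterm, htermx]
      obtain ⟨m, hm | hm⟩ := hpt i
      · rw [hm]
        exact (h4 m).1
      · rw [hm]
        exact (h4 m).2

end TangledMu

namespace TangledMu

open FirstOrder Language

variable {W P : Type}

/-- The first-order translation of the diamond. -/
def diaFO (θ : (folLang P).Formula (Fin 1)) : (folLang P).Formula (Fin 1) :=
  (rT (n := 1) xT (vT 0) ⊓
    BoundedFormula.relabel (fun _ : Fin 1 => Sum.inr (0 : Fin 1)) θ).ex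

theorem realize_diaFO (θ : (folLang P).Formula (Fin 1)) (M : KModel W P) (w : W) :
    FOSat M (diaFO θ) w ↔ ∃ u, M.rel w u ∧ FOSat M θ u := by
  letI : (folLang P).Structure W := folStr M
  have h0 : ∀ (p : Fin 0 → W) (a : W), (Fin.snoc p a : Fin 1 → W) 0 = a := by
    intro p a
    simp [Fin.snoc]
  rw [FOSat, Formula.Realize, diaFO, BoundedFormula.realize_ex]
  constructor
  · rintro ⟨a, ha⟩
    rw [BoundedFormula.realize_inf, realize_rT_xv, realize_at] at ha
    obtain ⟨ha1, ha2⟩ := ha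
    rw [h0] at ha1
    rw [h0] at ha2
    exact ⟨a, ha1, ha2⟩
  · rintro ⟨u, hu1, hu2⟩
    refine ⟨u, ?_⟩
    rw [BoundedFormula.realize_inf, realize_rT_xv, realize_at]
    exact ⟨hu1, hu2⟩

theorem realize_notFO (θ : (folLang P).Formula (Fin 1)) (M : KModel W P) (w : W) :
    FOSat M θ.not w ↔ ¬ FOSat M θ w := by
  letI : (folLang P).Structure W := folStr M
  exact Formula.realize_not

theorem realize_infFO (θ₁ θ₂ : (folLang P).Formula (Fin 1)) (M : KModel W P) (w : W) :
    FOSat M (θ₁ ⊓ θ₂) w ↔ FOSat M θ₁ w ∧ FOSat M θ₂ w := by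
  letI : (folLang P).Structure W := folStr M
  exact Formula.realize_inf

theorem realize_supFO (θ₁ θ₂ : (folLang P).Formula (Fin 1)) (M : KModel W P) (w : W) :
    FOSat M (θ₁ ⊔ θ₂) w ↔ FOSat M θ₁ w ∨ FOSat M θ₂ w := by
  letI : (folLang P).Structure W := folStr M
  exact Formula.realize_sup

end TangledMu

namespace TangledMu

open FirstOrder Language

theorem tangle_first_order_definable' {P : Type} (ψ : MuForm P) (hψ : IsTangle ψ) :
    ∃ θ : (folLang P).Formula (Fin 1),
      ∀ (W : Type) (M : KModel W P), WeaklyTransitive M.rel → PathFinite M →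
        ∀ w : W, M.Sat w ψ ↔ FOSat M θ w := by
  induction hψ with
  | tru =>
      refine ⟨⊤, fun W M _ _ w => ?_⟩
      have h2 : FOSat M ⊤ w ↔ True := by
        letI : (folLang P).Structure W := folStr M
        exact Formula.realize_top
      constructor
      · intro _; exact h2.mpr trivial
      · intro _; exact Set.mem_univ w
  | prop p =>
      refine ⟨Relations.formula₁ (p : (folLang P).Relations 1) (Term.var (0 : Fin 1)),
        fun W M _ _ w => ?_⟩
      have h2 : FOSat M (Relations.formula₁ (p : (folLang P).Relations 1)
          (Term.var (0 : Fin 1))) w ↔ w ∈ M.val p := by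
        letI : (folLang P).Structure W := folStr M
        rw [FOSat]
        exact Iff.rfl
      exact (Iff.rfl : M.Sat w (.prop p) ↔ w ∈ M.val p).trans h2.symm
  | @neg φ hφ ih =>
      obtain ⟨θ, hθ⟩ := ih
      refine ⟨θ.not, fun W M hwk hpf w => ?_⟩
      rw [realize_notFO, ← hθ W M hwk hpf w]
      exact sat_neg_closed M (isTangle_closed hφ).1 (isTangle_closed hφ).2 w
  | @and φ₁ φ₂ _ _ ih1 ih2 =>
      obtain ⟨θ₁, hθ₁⟩ := ih1
      obtain ⟨θ₂, hθ₂⟩ := ih2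
      refine ⟨θ₁ ⊓ θ₂, fun W M hwk hpf w => ?_⟩
      rw [realize_infFO, ← hθ₁ W M hwk hpf w, ← hθ₂ W M hwk hpf w]
      exact Iff.rfl
  | @or φ₁ φ₂ _ _ ih1 ih2 =>
      obtain ⟨θ₁, hθ₁⟩ := ih1
      obtain ⟨θ₂, hθ₂⟩ := ih2
      refine ⟨θ₁ ⊔ θ₂, fun W M hwk hpf w => ?_⟩
      rw [realize_supFO, ← hθ₁ W M hwk hpf w, ← hθ₂ W M hwk hpf w]
      exact Iff.rfl
  | @dia φ _ ih =>
      obtain ⟨θ, hθ⟩ := ih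
      refine ⟨diaFO θ, fun W M hwk hpf w => ?_⟩
      rw [realize_diaFO]
      constructor
      · rintro ⟨u, hu1, hu2⟩
        exact ⟨u, hu1, (hθ W M hwk hpf u).mp hu2⟩
      · rintro ⟨u, hu1, hu2⟩
        exact ⟨u, hu1, (hθ W M hwk hpf u).mpr hu2⟩
  | @box φ _ ih =>
      obtain ⟨θ, hθ⟩ := ih
      refine ⟨(diaFO θ.not).not, fun W M hwk hpf w => ?_⟩
      rw [realize_notFO, realize_diaFO]
      constructor
      · intro h hc
        obtain ⟨u, hu1, hu2⟩ := hc
        rw [realize_notFO] at hu2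
        exact hu2 ((hθ W M hwk hpf u).mp (h u hu1))
      · intro h u hu
        by_contra hc
        apply h
        refine ⟨u, hu, ?_⟩
        rw [realize_notFO]
        intro hc'
        exact hc ((hθ W M hwk hpf u).mpr hc')
  | @tangle Γ hΓ ih =>
      by_cases hk : 0 < Γ.length
      · have hch : ∀ m : Fin Γ.length, ∃ θ : (folLang P).Formula (Fin 1),
            ∀ (W : Type) (M : KModel W P), WeaklyTransitive M.rel → PathFinite M →
              ∀ w : W, M.Sat w (Γ.get m) ↔ FOSat M θ w :=
          fun m => ih (Γ.get m) (List.get_mem Γ m)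
        choose θ hθ using hch
        refine ⟨tangleFO Γ.length θ, fun W M hwk hpf w => ?_⟩
        have hv : ∀ φ ∈ Γ, φ.varsBelow 0 := fun φ hφ => (isTangle_closed (hΓ φ hφ)).1
        have hn : ∀ φ ∈ Γ, φ.noNames := fun φ hφ => (isTangle_closed (hΓ φ hφ)).2
        rw [sat_tangleForm_iff M hwk hpf Γ hv hn hk w]
        have hAeq : (fun m : Fin Γ.length => (Γ.get m).sat M (fun _ => ∅)) =
            (fun m : Fin Γ.length => {u | FOSat M (θ m) u}) := by
          funext m
          ext u
          exact hθ m W M hwk hpf u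
        rw [hAeq]
        exact (realize_tangleFO Γ.length θ M w).symm
      · refine ⟨⊥, fun W M hwk hpf w => ?_⟩
        have h2 : FOSat M (⊥ : (folLang P).Formula (Fin 1)) w ↔ False := by
          letI : (folLang P).Structure W := folStr M
          exact Formula.realize_bot
        rw [h2]
        constructor
        · intro hs
          obtain ⟨X, hX, hxX⟩ := hs
          have := (mem_sat_bigOr M _ _ w).mp (hX hxX)
          obtain ⟨φ, hφ, _⟩ := this
          rw [List.mem_map] at hφ
          obtain ⟨i, hi, _⟩ := hφ
          rw [List.mem_range] at hi
          omega
        · exact False.elim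

end TangledMu

namespace TangledMu

/-- Every tangle formula is first-order definable over path-finite
`wK4` frames: for every `ψ ∈ L_◇^∞` there is a first-order formula `θ(x)` (in the
language with a binary relation symbol for `⊏` and a unary predicate for each
propositional variable) such that on every path-finite weakly transitive Kripke model
`M` and every `w ∈ M`, `w ⊨_M ψ ↔ M ⊨ θ(w)`. -/
theorem tangle_first_order_definable {P : Type} (ψ : MuForm P) (hψ : IsTangle ψ) :
    ∃ θ : (folLang P).Formula (Fin 1),
      ∀ (W : Type) (M : KModel W P), WeaklyTransitive M.rel → PathFinite M →
        ∀ w : W, M.Sat w ψ ↔ FOSat M θ w := by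
  exact tangle_first_order_definable' ψ hψ

end TangledMu
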